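/- Let E be a field of characteristic zero with a derivation ∂, let K be a subfield of E closed under ∂, and let ρ ∈ E be nonzero. Then the smallest subfield of E containing K and all iterated derivatives ∂ⁿρ (n ≥ 0) coincides with the smallest subfield of E containing K, the element ρ, and all iterated derivatives ∂ⁿ(∂ρ/ρ) (n ≥ 0). -/

import Mathlib

lemma dt_one_aux {E : Type*} [Field E] (dt : E → E)
    (hmul : ∀ a b : E, dt (a * b) = a * dt b + dt a * b) : dt 1 = 0 := by
  have h := hmul 1 1
  rw [one_mul, mul_one, one_mul] at h
  linear_combination -h

lemma dt_closure_aux {E : Type*} [Field E] (dt : E → E)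
    (hadd : ∀ a b : E, dt (a + b) = dt a + dt b)
    (hmul : ∀ a b : E, dt (a * b) = a * dt b + dt a * b)
    (S : Set E) (hS : ∀ x ∈ S, dt x ∈ Subfield.closure S) :
    ∀ x ∈ Subfield.closure S, dt x ∈ Subfield.closure S := by
  have h1 : dt 1 = 0 := dt_one_aux dt hmul
  have h0 : dt 0 = 0 := by
    have h := hadd 0 0; rw [add_zero] at h; linear_combination -h
  intro x hx
  induction hx using Subfield.closure_induction with
  | mem x hx => exact hS x hx
  | one => rw [h1]; exact zero_mem _
  | add x y hx hy ihx ihy => rw [hadd]; exact add_mem ihx ihy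
  | neg x hx ihx =>
      have h := hadd x (-x)
      rw [add_neg_cancel, h0] at h
      have hn : dt (-x) = - dt x := by linear_combination -h
      rw [hn]; exact neg_mem ihx
  | inv x hx ihx =>
      by_cases hx0 : x = 0
      · simp [hx0, h0]
      · have hxi : x * x⁻¹ = 1 := mul_inv_cancel₀ hx0
        have h := hmul x x⁻¹
        rw [hxi, h1] at h
        have hinv : dt x⁻¹ = - (dt x * x⁻¹ * x⁻¹) := by
          field_simp at h ⊢
          linear_combination -h
        rw [hinv]
        exact neg_mem (mul_mem (mul_mem ihx (inv_mem hx)) (inv_mem hx))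
  | mul x y hx hy ihx ihy =>
      rw [hmul]
      exact add_mem (mul_mem hx ihy) (mul_mem ihx hy)

theorem diff_field_gen_by_sol_eq_gen_by_logderiv
    (E : Type*) [Field E] [CharZero E]
    (dt : E → E)
    (hadd : ∀ a b : E, dt (a + b) = dt a + dt b)
    (hmul : ∀ a b : E, dt (a * b) = a * dt b + dt a * b)
    (K : Subfield E)
    (hK : ∀ a ∈ K, dt a ∈ K)
    (ρ : E) (hρ : ρ ≠ 0) :
    Subfield.closure ((K : Set E) ∪ Set.range (fun n : ℕ => dt^[n] ρ)) =
      Subfield.closure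
        (insert ρ ((K : Set E) ∪ Set.range (fun n : ℕ => dt^[n] (dt ρ / ρ)))) := by
  set S1 : Set E := (K : Set E) ∪ Set.range (fun n : ℕ => dt^[n] ρ) with hS1
  set S2 : Set E := insert ρ ((K : Set E) ∪ Set.range (fun n : ℕ => dt^[n] (dt ρ / ρ))) with hS2
  have hc1 : ∀ x ∈ S1, dt x ∈ Subfield.closure S1 := by
    rintro x (hx | ⟨n, rfl⟩)
    · exact Subfield.subset_closure (Or.inl (hK x hx))
    · exact Subfield.subset_closure
        (Or.inr ⟨n + 1, by simpa using Function.iterate_succ_apply' dt n ρ⟩)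
  have hc2 : ∀ x ∈ S2, dt x ∈ Subfield.closure S2 := by
    have hρ2 : ρ ∈ Subfield.closure S2 := Subfield.subset_closure (Or.inl rfl)
    have hlρ : dt ρ / ρ ∈ Subfield.closure S2 :=
      Subfield.subset_closure (Or.inr (Or.inr ⟨0, rfl⟩))
    rintro x (rfl | hx | ⟨n, rfl⟩)
    · have : dt x = x * (dt x / x) := by field_simp
      rw [this]; exact mul_mem hρ2 hlρ
    · exact Subfield.subset_closure (Or.inr (Or.inl (hK x hx)))
    · exact Subfield.subset_closure
        (Or.inr (Or.inr ⟨n + 1, by simpa using Function.iterate_succ_apply' dt n (dt ρ / ρ)⟩))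
  have key1 := dt_closure_aux dt hadd hmul S1 hc1
  have key2 := dt_closure_aux dt hadd hmul S2 hc2
  apply le_antisymm
  · apply Subfield.closure_le.mpr
    rintro x (hx | ⟨n, rfl⟩)
    · exact Subfield.subset_closure (Or.inr (Or.inl hx))
    · induction n with
      | zero => exact Subfield.subset_closure (Or.inl rfl)
      | succ n ih =>
          show dt^[n + 1] ρ ∈ _
          rw [Function.iterate_succ_apply' dt n ρ]
          exact key2 _ ih
  · apply Subfield.closure_le.mpr
    have hρ1 : ρ ∈ Subfield.closure S1 := Subfield.subset_closure (Or.inr ⟨0, rfl⟩)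
    have hdρ1 : dt ρ ∈ Subfield.closure S1 := Subfield.subset_closure (Or.inr ⟨1, rfl⟩)
    rintro x (rfl | hx | ⟨n, rfl⟩)
    · exact hρ1
    · exact Subfield.subset_closure (Or.inl hx)
    · induction n with
      | zero => exact div_mem hdρ1 hρ1
      | succ n ih =>
          show dt^[n + 1] (dt ρ / ρ) ∈ _
          rw [Function.iterate_succ_apply' dt n (dt ρ / ρ)]
          exact key1 _ ih
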